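/- arXiv:2510.22708 — 7 statements merged into one kernel-verified Lean document; each statement's English description precedes it below -/
import Mathlib

section
/- Let k be a natural number and let G be a nilpotent subgroup of the isometry group of E_k = EuclideanSpace ℝ (Fin k) which is closed (the set of underlying functions of elements of G is closed in E_k → E_k with the topology of pointwise convergence). If the orbit of the origin under G is cocompact, i.e. there exists R > 0 such that for every x ∈ E_k there is g ∈ G with dist x (g 0) ≤ R, then G acts on E_k by translations: for every g ∈ G there exists v ∈ E_k such that g x = x + v for all x ∈ E_k. -/
open scoped commutatorElement

/-- A norm-preserving linear map which is "unipotent" at a vector `x` (iterating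
`y ↦ A y - y` eventually kills `x`) fixes `x`. -/
private lemma aux_unipotent {k : ℕ}
    (A : EuclideanSpace ℝ (Fin k) →ₗ[ℝ] EuclideanSpace ℝ (Fin k))
    (hA : ∀ x, ‖A x‖ = ‖x‖) :
    ∀ (m : ℕ) (x : EuclideanSpace ℝ (Fin k)),
      (fun y => A y - y)^[m] x = 0 → A x = x := by
  intro m
  induction m with
  | zero =>
    intro x hx
    simp only [Function.iterate_zero, id_eq] at hx
    simp [hx]
  | succ m ih =>
    intro x hx
    rw [Function.iterate_succ_apply] at hx
    have h1 : A (A x - x) = A x - x := ih _ hx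
    rw [map_sub] at h1
    have hu : A (A x) + x = (2:ℝ) • A x := by
      rw [two_smul]
      linear_combination (norm := module) h1
    have hpar := parallelogram_law_with_norm ℝ (A (A x)) x
    have hn1 : ‖A (A x)‖ = ‖x‖ := by rw [hA, hA]
    have hn2 : ‖A (A x) + x‖ = 2 * ‖x‖ := by
      rw [hu, norm_smul]
      simp [hA]
    rw [hn1, hn2] at hpar
    have hz : ‖A (A x) - x‖ = 0 := by nlinarith [norm_nonneg (A (A x) - x)]
    have hfix : A (A x) = x := sub_eq_zero.mp (norm_eq_zero.mp hz)
    have hxx : x - A x = A x - x := by rw [hfix] at h1; exact h1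
    have h2 : (2:ℝ) • (A x - x) = 0 := by
      rw [two_smul]
      linear_combination (norm := module) hxx.symm
    rcases smul_eq_zero.mp h2 with h | h
    · norm_num at h
    · exact sub_eq_zero.mp h

/-- If a linear map sends every vector within uniformly bounded distance of a
(finite dimensional, hence closed) submodule, its range lies in the submodule. -/
private lemma aux_range_le {k : ℕ}
    (N : EuclideanSpace ℝ (Fin k) →ₗ[ℝ] EuclideanSpace ℝ (Fin k))
    (S : Submodule ℝ (EuclideanSpace ℝ (Fin k))) (C : ℝ)
    (h : ∀ v, ∃ s ∈ S, ‖N v - s‖ ≤ C) : ∀ v, N v ∈ S := by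
  intro v
  have hS : IsClosed (S : Set (EuclideanSpace ℝ (Fin k))) := S.closed_of_finiteDimensional
  have hcl : N v ∈ closure (S : Set (EuclideanSpace ℝ (Fin k))) := by
    rw [Metric.mem_closure_iff]
    intro ε hε
    set t : ℝ := max 1 (C / ε + 1) with ht
    have ht1 : (1:ℝ) ≤ t := le_max_left _ _
    have htpos : (0:ℝ) < t := lt_of_lt_of_le one_pos ht1
    obtain ⟨s, hs, hns⟩ := h (t • v)
    refine ⟨t⁻¹ • s, S.smul_mem _ hs, ?_⟩
    have key : N v - t⁻¹ • s = t⁻¹ • (N (t • v) - s) := by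
      rw [smul_sub, map_smul, smul_smul, inv_mul_cancel₀ htpos.ne', one_smul]
    rw [dist_eq_norm, key, norm_smul, Real.norm_eq_abs, abs_of_pos (inv_pos.mpr htpos)]
    have hCt : C < ε * t := by
      have h2 : C / ε + 1 ≤ t := le_max_right _ _
      have h3 : C / ε < t := by linarith
      calc C = ε * (C / ε) := by field_simp
        _ < ε * t := mul_lt_mul_of_pos_left h3 hε
    calc t⁻¹ * ‖N (t • v) - s‖ ≤ t⁻¹ * C :=
          mul_le_mul_of_nonneg_left hns (le_of_lt (inv_pos.mpr htpos))
      _ < ε := by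
          rw [inv_mul_lt_iff₀ htpos]
          linarith
  rw [hS.closure_eq] at hcl
  exact hcl

/-- A closed nilpotent subgroup of the isometry group of Euclidean space whose
orbit of the origin is cocompact acts by translations. -/
theorem closed_nilpotent_cocompact_subgroup_acts_by_translations (k : ℕ)
    (G : Subgroup (EuclideanSpace ℝ (Fin k) ≃ᵢ EuclideanSpace ℝ (Fin k)))
    (hnil : Group.IsNilpotent G)
    (hclosed : IsClosed {f : EuclideanSpace ℝ (Fin k) → EuclideanSpace ℝ (Fin k) |
      ∃ g ∈ G, ⇑g = f})
    (hcocompact : ∃ R : ℝ, 0 < R ∧ ∀ x : EuclideanSpace ℝ (Fin k),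
      ∃ g ∈ G, dist x (g (0 : EuclideanSpace ℝ (Fin k))) ≤ R) :
    ∀ g ∈ G, ∃ v : EuclideanSpace ℝ (Fin k),
      ∀ x : EuclideanSpace ℝ (Fin k), g x = x + v := by
  classical
  obtain ⟨R, hR, hnet⟩ := hcocompact
  obtain ⟨n, hn⟩ := hnil
  suffices key : ∀ i, ∀ g : G, g ∈ Subgroup.upperCentralSeries G i →
      ∀ x, (g : EuclideanSpace ℝ (Fin k) ≃ᵢ EuclideanSpace ℝ (Fin k)) x
        = x + (g : EuclideanSpace ℝ (Fin k) ≃ᵢ EuclideanSpace ℝ (Fin k)) 0 by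
    intro g hg
    exact ⟨g 0, fun x => key n ⟨g, hg⟩ (hn ▸ Subgroup.mem_top _) x⟩
  have hcomm : ∀ (p q : G) (x : EuclideanSpace ℝ (Fin k)),
      (p : EuclideanSpace ℝ (Fin k) ≃ᵢ EuclideanSpace ℝ (Fin k))
        ((q : EuclideanSpace ℝ (Fin k) ≃ᵢ EuclideanSpace ℝ (Fin k)) x)
      = ((⁅p, q⁆ : G) : EuclideanSpace ℝ (Fin k) ≃ᵢ EuclideanSpace ℝ (Fin k))
        ((q : EuclideanSpace ℝ (Fin k) ≃ᵢ EuclideanSpace ℝ (Fin k))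
          ((p : EuclideanSpace ℝ (Fin k) ≃ᵢ EuclideanSpace ℝ (Fin k)) x)) := by
    intro p q x
    have h1 : p * q = ⁅p, q⁆ * (q * p) := by group
    calc (p : EuclideanSpace ℝ (Fin k) ≃ᵢ EuclideanSpace ℝ (Fin k))
          ((q : EuclideanSpace ℝ (Fin k) ≃ᵢ EuclideanSpace ℝ (Fin k)) x)
        = ((p * q : G) : EuclideanSpace ℝ (Fin k) ≃ᵢ EuclideanSpace ℝ (Fin k)) x := rfl
      _ = ((⁅p, q⁆ * (q * p) : G) : EuclideanSpace ℝ (Fin k) ≃ᵢ EuclideanSpace ℝ (Fin k)) x := by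
          rw [h1]
      _ = ((⁅p, q⁆ : G) : EuclideanSpace ℝ (Fin k) ≃ᵢ EuclideanSpace ℝ (Fin k))
          ((q : EuclideanSpace ℝ (Fin k) ≃ᵢ EuclideanSpace ℝ (Fin k))
            ((p : EuclideanSpace ℝ (Fin k) ≃ᵢ EuclideanSpace ℝ (Fin k)) x)) := rfl
  intro i
  induction i with
  | zero =>
    intro g hg x
    rw [upperCentralSeries_zero, Subgroup.mem_bot] at hg
    subst hg
    simp
  | succ i ih =>
    intro g hg
    set gi := (g : EuclideanSpace ℝ (Fin k) ≃ᵢ EuclideanSpace ℝ (Fin k)) with hgi_def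
    set a : EuclideanSpace ℝ (Fin k) := gi 0 with ha_def
    set A : EuclideanSpace ℝ (Fin k) →ₗ[ℝ] EuclideanSpace ℝ (Fin k) :=
      (gi.toRealLinearIsometryEquiv.toLinearEquiv :
        EuclideanSpace ℝ (Fin k) →ₗ[ℝ] EuclideanSpace ℝ (Fin k)) with hA_def
    have hA_apply : ∀ x, A x = gi x - a := by
      intro x
      have := gi.toRealLinearIsometryEquiv_apply x
      rw [ha_def]
      exact this
    have hA_norm : ∀ x, ‖A x‖ = ‖x‖ := fun x => gi.toRealLinearIsometryEquiv.norm_map x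
    set N : EuclideanSpace ℝ (Fin k) →ₗ[ℝ] EuclideanSpace ℝ (Fin k) :=
      A - LinearMap.id with hN_def
    have hN_apply : ∀ x, N x = A x - x := fun x => rfl
    set V : ℕ → Submodule ℝ (EuclideanSpace ℝ (Fin k)) := fun j =>
      Submodule.span ℝ {v | ∃ t : G, t ∈ Subgroup.upperCentralSeries G j ∧
        (t : EuclideanSpace ℝ (Fin k) ≃ᵢ EuclideanSpace ℝ (Fin k)) 0 = v} with hV_def
    have hV0 : V 0 = ⊥ := by
      rw [hV_def]
      rw [Submodule.span_eq_bot]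
      rintro v ⟨t, ht, rfl⟩
      rw [upperCentralSeries_zero, Subgroup.mem_bot] at ht
      subst ht
      simp
    have hgi_comm : ∀ h : G, ⁅g, h⁆ ∈ Subgroup.upperCentralSeries G i :=
      fun h => (mem_upperCentralSeries_succ_iff.mp hg) h
    have claimA : ∀ h : G, ∃ s ∈ V i,
        ‖N ((h : EuclideanSpace ℝ (Fin k) ≃ᵢ EuclideanSpace ℝ (Fin k)) 0) - s‖ ≤ 2 * ‖a‖ := by
      intro h
      set hi := (h : EuclideanSpace ℝ (Fin k) ≃ᵢ EuclideanSpace ℝ (Fin k)) with hhi_def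
      set c : G := ⁅g, h⁆ with hc_def
      have hcZ : c ∈ Subgroup.upperCentralSeries G i := hgi_comm h
      have hct := ih c hcZ
      refine ⟨(c : EuclideanSpace ℝ (Fin k) ≃ᵢ EuclideanSpace ℝ (Fin k)) 0,
        Submodule.subset_span ⟨c, hcZ, rfl⟩, ?_⟩
      have hrel := hcomm g h 0
      have hgih : gi (hi 0)
          = hi a + (c : EuclideanSpace ℝ (Fin k) ≃ᵢ EuclideanSpace ℝ (Fin k)) 0 := by
        rw [hrel, hct (hi (gi 0)), ha_def]
      have hkey : N (hi 0) - (c : EuclideanSpace ℝ (Fin k) ≃ᵢ EuclideanSpace ℝ (Fin k)) 0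
          = hi a - hi 0 - a := by
        rw [hN_apply, hA_apply, hgih]
        abel
      rw [hkey]
      calc ‖hi a - hi 0 - a‖ ≤ ‖hi a - hi 0‖ + ‖a‖ := norm_sub_le _ _
        _ = dist (hi a) (hi 0) + ‖a‖ := by rw [dist_eq_norm]
        _ = dist a 0 + ‖a‖ := by rw [hi.dist_eq]
        _ = 2 * ‖a‖ := by rw [dist_zero_right]; ring
    have hNnorm : ∀ x, ‖N x‖ ≤ 2 * ‖x‖ := by
      intro x
      rw [hN_apply]
      calc ‖A x - x‖ ≤ ‖A x‖ + ‖x‖ := norm_sub_le _ _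
        _ = 2 * ‖x‖ := by rw [hA_norm]; ring
    have claimB : ∀ v, ∃ s ∈ V i, ‖N v - s‖ ≤ 2 * ‖a‖ + 2 * R := by
      intro v
      obtain ⟨h0, hh0G, hd⟩ := hnet v
      obtain ⟨s, hs, hns⟩ := claimA ⟨h0, hh0G⟩
      refine ⟨s, hs, ?_⟩
      have hsplit : N v - s = N (v - h0 0) + (N (h0 0) - s) := by
        rw [map_sub]; abel
      calc ‖N v - s‖ = ‖N (v - h0 0) + (N (h0 0) - s)‖ := by rw [hsplit]
        _ ≤ ‖N (v - h0 0)‖ + ‖N (h0 0) - s‖ := norm_add_le _ _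
        _ ≤ 2 * ‖v - h0 0‖ + 2 * ‖a‖ := add_le_add (hNnorm _) hns
        _ ≤ 2 * R + 2 * ‖a‖ := by
            have hvb : ‖v - h0 0‖ ≤ R := by rw [← dist_eq_norm]; exact hd
            linarith
        _ = 2 * ‖a‖ + 2 * R := by ring
    have hNV : ∀ v, N v ∈ V i := aux_range_le N (V i) (2 * ‖a‖ + 2 * R) claimB
    have claimC : ∀ j, j ≤ i → ∀ v ∈ V j, N v ∈ V (j - 1) := by
      intro j hj v hv
      refine Submodule.span_induction ?_ ?_ ?_ ?_ hv
      · rintro w ⟨t, htZ, rfl⟩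
        cases j with
        | zero =>
          rw [upperCentralSeries_zero, Subgroup.mem_bot] at htZ
          subst htZ
          simpa using (V (0 - 1)).zero_mem
        | succ j' =>
          set ti := (t : EuclideanSpace ℝ (Fin k) ≃ᵢ EuclideanSpace ℝ (Fin k)) with hti_def
          set c : G := ⁅t, g⁆ with hc_def
          have hcZ : c ∈ Subgroup.upperCentralSeries G j' :=
            (mem_upperCentralSeries_succ_iff.mp htZ) g
          have htT := ih t (upperCentralSeries_mono _ hj htZ)
          have hcT := ih c (upperCentralSeries_mono _ (le_trans (Nat.le_succ j') hj) hcZ)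
          have hrel := hcomm t g 0
          -- hrel : ti (gi 0) = c (gi (ti 0))
          have h1 : gi 0 + ti 0 = gi (ti 0)
              + (c : EuclideanSpace ℝ (Fin k) ≃ᵢ EuclideanSpace ℝ (Fin k)) 0 := by
            rw [← htT (gi 0), hrel, hcT (gi (ti 0))]
          have h2 : N (ti 0)
              = -((c : EuclideanSpace ℝ (Fin k) ≃ᵢ EuclideanSpace ℝ (Fin k)) 0) := by
            rw [hN_apply, hA_apply, ha_def]
            have : gi (ti 0) = gi 0 + ti 0
                - (c : EuclideanSpace ℝ (Fin k) ≃ᵢ EuclideanSpace ℝ (Fin k)) 0 := by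
              rw [h1]; abel
            rw [this]
            abel
          rw [h2]
          have : (c : EuclideanSpace ℝ (Fin k) ≃ᵢ EuclideanSpace ℝ (Fin k)) 0 ∈ V j' :=
            Submodule.subset_span ⟨c, hcZ, rfl⟩
          simpa using (V (j' + 1 - 1)).neg_mem (by simpa using this)
      · simpa using (V (j - 1)).zero_mem
      · intro x y _ _ hx hy
        rw [map_add]; exact (V (j - 1)).add_mem hx hy
      · intro r x _ hx
        rw [map_smul]; exact (V (j - 1)).smul_mem r hx
    have claimD : ∀ m v, (⇑N)^[m + 1] v ∈ V (i - m) := by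
      intro m
      induction m with
      | zero => intro v; simpa using hNV v
      | succ m ihm =>
        intro v
        rw [Function.iterate_succ_apply']
        have := claimC (i - m) (Nat.sub_le i m) _ (ihm v)
        rwa [Nat.sub_sub] at this
    have hN0 : ∀ x, (fun y => A y - y)^[i + 1] x = 0 := by
      intro x
      have h1 : (⇑N)^[i + 1] x ∈ V (i - i) := claimD i x
      rw [Nat.sub_self, hV0, Submodule.mem_bot] at h1
      have hfun : (fun y => A y - y) = ⇑N := by funext y; rw [hN_apply]
      rw [hfun]
      exact h1
    have hAx : ∀ x, A x = x := fun x => aux_unipotent A hA_norm (i + 1) x (hN0 x)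
    intro x
    have hax := hA_apply x
    rw [hAx x] at hax
    exact (eq_sub_iff_add_eq.mp hax).symm
end

section
/- Let k be a natural number and let K be a subgroup of the isometry group of E_k = EuclideanSpace ℝ (Fin k) which is closed (the set of underlying functions of elements of K is closed in E_k → E_k with the topology of pointwise convergence). Suppose the orbit of the origin under K is not contained in any half-space; that is, there exists no unit vector v ∈ E_k such that ⟪v, g 0⟫ ≥ 0 for all g ∈ K. Then the orbit K·0 is cocompact: there exists R > 0 such that for every x ∈ E_k there is g ∈ K with dist x (g 0) ≤ R. -/
open scoped RealInnerProductSpace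

/-- If the orbit of the origin under a closed subgroup of the isometry group of
Euclidean space is not contained in any half-space, then the orbit is cocompact. -/
theorem orbit_not_in_halfspace_implies_cocompact (k : ℕ)
    (K : Subgroup (EuclideanSpace ℝ (Fin k) ≃ᵢ EuclideanSpace ℝ (Fin k)))
    (hclosed : IsClosed {f : EuclideanSpace ℝ (Fin k) → EuclideanSpace ℝ (Fin k) |
      ∃ g ∈ K, ⇑g = f})
    (hhalf : ¬ ∃ v : EuclideanSpace ℝ (Fin k), ‖v‖ = 1 ∧
      ∀ g ∈ K, 0 ≤ ⟪v, g (0 : EuclideanSpace ℝ (Fin k))⟫) :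
    ∃ R : ℝ, 0 < R ∧ ∀ x : EuclideanSpace ℝ (Fin k),
      ∃ g ∈ K, dist x (g (0 : EuclideanSpace ℝ (Fin k))) ≤ R := by
  classical
  set E := EuclideanSpace ℝ (Fin k)
  by_contra hcon
  push_neg at hcon
  choose x hx using fun n : ℕ => hcon ((n : ℝ) + 1) (by positivity)
  set S : Set E := (fun g : E ≃ᵢ E => g 0) '' (K : Set _) with hS
  have hSne : S.Nonempty := ⟨(1 : E ≃ᵢ E) 0, ⟨1, K.one_mem, rfl⟩⟩
  set d : ℕ → ℝ := fun n => Metric.infDist (x n) S with hdDef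
  have hd : ∀ n : ℕ, (n : ℝ) + 1 ≤ d n := by
    intro n
    by_contra hlt'
    push_neg at hlt'
    obtain ⟨p, hpS, hpd⟩ := (Metric.infDist_lt_iff hSne).mp hlt'
    obtain ⟨g, hg, rfl⟩ := hpS
    exact absurd hpd (not_lt.mpr (hx n g hg).le)
  have hlt : ∀ n : ℕ, ∃ g ∈ K, dist (x n) (g 0) < d n + 1 / ((n : ℝ) + 1) := by
    intro n
    obtain ⟨p, hpS, hpd⟩ := (Metric.infDist_lt_iff hSne).mp
      (lt_add_of_pos_right (d n) (by positivity : (0:ℝ) < 1 / ((n : ℝ) + 1)))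
    obtain ⟨g, hg, rfl⟩ := hpS
    exact ⟨g, hg, hpd⟩
  choose h hhK hhdist using hlt
  have key : ∀ (h : E ≃ᵢ E) (a b : E), dist (h⁻¹ a) b = dist a (h b) := by
    intro h a b
    rw [← IsometryEquiv.dist_eq h]
    congr 1
    exact h.apply_symm_apply a
  set y : ℕ → E := fun n => (h n)⁻¹ (x n) with hy
  have hyd : ∀ n : ℕ, ∀ g ∈ K, d n ≤ dist (y n) (g 0) := by
    intro n g hg
    have h1 : dist (y n) (g 0) = dist (x n) ((h n * g) 0) := key (h n) (x n) (g 0)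
    rw [h1]
    exact Metric.infDist_le_dist_of_mem ⟨h n * g, K.mul_mem (hhK n) hg, rfl⟩
  have hny : ∀ n : ℕ, ‖y n‖ = dist (x n) (h n 0) := by
    intro n
    rw [← dist_zero_right]
    exact key (h n) (x n) 0
  have hylb : ∀ n : ℕ, (n : ℝ) + 1 ≤ ‖y n‖ := by
    intro n
    have := hyd n 1 K.one_mem
    have h1 : (1 : E ≃ᵢ E) 0 = 0 := rfl
    rw [h1, dist_zero_right] at this
    linarith [hd n]
  have hyub : ∀ n : ℕ, ‖y n‖ < d n + 1 / ((n : ℝ) + 1) := by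
    intro n; rw [hny n]; exact hhdist n
  have hinner : ∀ n : ℕ, ∀ g ∈ K,
      ⟪y n, g 0⟫ ≤ ‖g 0‖ ^ 2 / 2 + (1 / ((n : ℝ) + 1)) * ‖y n‖ := by
    intro n g hg
    set q := g 0
    set ε := 1 / ((n : ℝ) + 1) with hε
    have hε0 : 0 < ε := by positivity
    have hε1 : ε ≤ 1 := by
      rw [hε]
      rw [div_le_one (by positivity)]
      linarith [Nat.cast_nonneg (α := ℝ) n]
    have h1 : ‖y n‖ - ε ≤ dist (y n) q := by
      have := hyd n g hg
      have := hyub n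
      linarith
    have h0 : 0 ≤ ‖y n‖ - ε := by linarith [hylb n, Nat.cast_nonneg (α := ℝ) n]
    have h2 : (‖y n‖ - ε) ^ 2 ≤ dist (y n) q ^ 2 :=
      pow_le_pow_left₀ h0 h1 2
    rw [dist_eq_norm, norm_sub_sq_real] at h2
    nlinarith [hylb n, Nat.cast_nonneg (α := ℝ) n]
  set u : ℕ → E := fun n => (-‖y n‖⁻¹) • y n with hu
  have hyn0 : ∀ n : ℕ, ‖y n‖ ≠ 0 := by
    intro n
    have h1 := hylb n
    have h2 : (0:ℝ) ≤ (n : ℝ) := Nat.cast_nonneg n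
    intro h0
    rw [h0] at h1
    linarith
  have hun : ∀ n : ℕ, u n ∈ Metric.sphere (0 : E) 1 := by
    intro n
    simp only [Metric.mem_sphere, dist_zero_right, hu, norm_smul, norm_neg, norm_inv,
      norm_norm]
    rw [Real.norm_of_nonneg (norm_nonneg _), inv_mul_cancel₀ (hyn0 n)]
  obtain ⟨v, hvmem, φ, hφ, hconv⟩ := (isCompact_sphere (0 : E) 1).tendsto_subseq hun
  have hv1 : ‖v‖ = 1 := by simpa using hvmem
  refine hhalf ⟨v, hv1, ?_⟩
  intro g hg
  set q := g 0 with hq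
  have hcont : Filter.Tendsto (fun n => ⟪u (φ n), q⟫) Filter.atTop (nhds ⟪v, q⟫) :=
    hconv.inner tendsto_const_nhds
  have hbound : ∀ n : ℕ, -((‖q‖ ^ 2 / 2 + 1) / ((n : ℝ) + 1)) ≤ ⟪u (φ n), q⟫ := by
    intro n
    set m := φ n
    have hmn : (n : ℝ) ≤ (m : ℝ) := by exact_mod_cast (hφ.id_le n)
    have hypos : (0 : ℝ) < ‖y m‖ := lt_of_lt_of_le (by positivity) (hylb m)
    have hiu : ⟪u m, q⟫ = -‖y m‖⁻¹ * ⟪y m, q⟫ := real_inner_smul_left _ _ _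
    rw [hiu]
    have hinv : ‖y m‖⁻¹ ≤ 1 / ((m : ℝ) + 1) := by
      rw [inv_eq_one_div]
      apply div_le_div_of_nonneg_left (by norm_num) (by positivity) (hylb m)
    have h1 := hinner m g hg
    rw [← hq] at h1
    have hq0 : 0 ≤ ‖q‖ ^ 2 / 2 := by positivity
    -- -‖y m‖⁻¹ * ⟪y m, q⟫ ≥ -‖y m‖⁻¹ * (‖q‖^2/2 + ε_m ‖y m‖) ≥ -(‖q‖^2/2+1)/(m+1)
    have h2 : -‖y m‖⁻¹ * ⟪y m, q⟫ ≥ -‖y m‖⁻¹ * (‖q‖ ^ 2 / 2) - 1 / ((m : ℝ) + 1) := by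
      have hεy : ‖y m‖⁻¹ * ((1 / ((m : ℝ) + 1)) * ‖y m‖) = 1 / ((m : ℝ) + 1) := by
        field_simp
      nlinarith [inv_pos.mpr hypos, mul_le_mul_of_nonneg_left h1 (le_of_lt (inv_pos.mpr hypos))]
    have h3 : -‖y m‖⁻¹ * (‖q‖ ^ 2 / 2) ≥ -((1 / ((m : ℝ) + 1)) * (‖q‖ ^ 2 / 2)) := by
      nlinarith
    have h4 : -((‖q‖ ^ 2 / 2 + 1) / ((m : ℝ) + 1)) ≤
        -((1 / ((m : ℝ) + 1)) * (‖q‖ ^ 2 / 2)) - 1 / ((m : ℝ) + 1) := by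
      have heq : (1 / ((m : ℝ) + 1)) * (‖q‖ ^ 2 / 2) + 1 / ((m : ℝ) + 1)
          = (‖q‖ ^ 2 / 2 + 1) / ((m : ℝ) + 1) := by ring
      linarith
    have h5 : -((‖q‖ ^ 2 / 2 + 1) / ((n : ℝ) + 1)) ≤
        -((‖q‖ ^ 2 / 2 + 1) / ((m : ℝ) + 1)) := by
      apply neg_le_neg
      apply div_le_div_of_nonneg_left (by positivity) (by positivity) (by linarith)
    linarith
  have hzero : Filter.Tendsto (fun n : ℕ => -((‖q‖ ^ 2 / 2 + 1) / ((n : ℝ) + 1)))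
      Filter.atTop (nhds 0) := by
    have h1 : Filter.Tendsto (fun n : ℕ => 1 / ((n : ℝ) + 1)) Filter.atTop (nhds 0) :=
      tendsto_one_div_add_atTop_nhds_zero_nat
    have h2 := (h1.const_mul (‖q‖ ^ 2 / 2 + 1)).neg
    simp only [mul_zero, neg_zero] at h2
    convert h2 using 2 with n
    ring
  exact le_of_tendsto_of_tendsto' hzero hcont hbound
end

section
/- Let Γ be a group acting by isometries on a metric space X, let p ∈ X, and let Γ̂ be a normal subgroup of Γ. For r ≥ 0 set Γ(r) := {γ ∈ Γ : dist p (γ • p) ≤ r}, Γ̂(r) := {γ ∈ Γ̂ : dist p (γ • p) ≤ r}, and let (Γ/Γ̂)(r) denote the set of cosets c ∈ Γ/Γ̂ that contain some element γ with dist p (γ • p) ≤ r. Then for every r ≥ 0 such that Γ(r) is finite, one has the cardinality inequality |Γ̂(r/2)| · |(Γ/Γ̂)(r/2)| ≤ |Γ(r)|. -/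
/-- Growth comparison between a group, a normal subgroup, and the quotient:
`|Γ̂(r/2)| · |(Γ/Γ̂)(r/2)| ≤ |Γ(r)|`. -/
theorem subgroup_quotient_orbit_growth {Γ X : Type*} [Group Γ] [MetricSpace X]
    [MulAction Γ X] (hiso : ∀ γ : Γ, Isometry (fun x : X => γ • x))
    (p : X) (Γhat : Subgroup Γ) (hnorm : Γhat.Normal)
    (r : ℝ) (hr : 0 ≤ r)
    (hfin : {γ : Γ | dist p (γ • p) ≤ r}.Finite) :
    Nat.card {γ : Γ | γ ∈ Γhat ∧ dist p (γ • p) ≤ r / 2} *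
      Nat.card {c : Γ ⧸ Γhat |
        ∃ γ : Γ, QuotientGroup.mk γ = c ∧ dist p (γ • p) ≤ r / 2} ≤
    Nat.card {γ : Γ | dist p (γ • p) ≤ r} := by
  classical
  have hfin' : Finite {γ : Γ | dist p (γ • p) ≤ r} := hfin.to_subtype
  set H := {γ : Γ | γ ∈ Γhat ∧ dist p (γ • p) ≤ r / 2}
  set Q := {c : Γ ⧸ Γhat | ∃ γ : Γ, QuotientGroup.mk γ = c ∧ dist p (γ • p) ≤ r / 2}
  -- the map
  have key : ∀ (h : H) (c : Q),
      dist p ((c.2.choose * (h : Γ)) • p) ≤ r := by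
    intro h c
    obtain ⟨hmem, hd⟩ := h.2
    have hd' := c.2.choose_spec.2
    calc dist p ((c.2.choose * (h : Γ)) • p)
        ≤ dist p (c.2.choose • p) + dist (c.2.choose • p) ((c.2.choose * (h : Γ)) • p) :=
          dist_triangle _ _ _
      _ = dist p (c.2.choose • p) + dist p ((h : Γ) • p) := by
          rw [mul_smul]
          congr 1
          exact ((hiso c.2.choose).dist_eq _ _).symm ▸ ((hiso c.2.choose).dist_eq p ((h : Γ) • p))
      _ ≤ r / 2 + r / 2 := add_le_add hd' hd
      _ = r := by ring
  let f : H × Q → {γ : Γ | dist p (γ • p) ≤ r} :=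
    fun hc => ⟨hc.2.2.choose * (hc.1 : Γ), key hc.1 hc.2⟩
  have hfinj : Function.Injective f := by
    rintro ⟨h₁, c₁⟩ ⟨h₂, c₂⟩ heq
    have heq' : (c₁.2.choose : Γ) * (h₁ : Γ) = c₂.2.choose * (h₂ : Γ) :=
      congrArg Subtype.val heq
    have hc : c₁ = c₂ := by
      apply Subtype.ext
      have e1 : (QuotientGroup.mk (c₁.2.choose * (h₁ : Γ)) : Γ ⧸ Γhat) = c₁.1 := by
        rw [QuotientGroup.mk_mul_of_mem _ h₁.2.1, c₁.2.choose_spec.1]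
      have e2 : (QuotientGroup.mk (c₂.2.choose * (h₂ : Γ)) : Γ ⧸ Γhat) = c₂.1 := by
        rw [QuotientGroup.mk_mul_of_mem _ h₂.2.1, c₂.2.choose_spec.1]
      rw [← e1, ← e2, heq']
    subst hc
    have hh : h₁ = h₂ := Subtype.ext (mul_left_cancel heq')
    rw [hh]
  calc Nat.card H * Nat.card Q = Nat.card (H × Q) := (Nat.card_prod _ _).symm
    _ ≤ Nat.card {γ : Γ | dist p (γ • p) ≤ r} := Nat.card_le_card_of_injective f hfinj
end

section
/- Let n, k be natural numbers and let Γ be a subgroup of the isometry group of E_n = EuclideanSpace ℝ (Fin n) which is isomorphic to ℤ^k and closed (the set of underlying functions of elements of Γ is closed in E_n → E_n with the topology of pointwise convergence). Then Γ acts freely on E_n: for every γ ∈ Γ with γ ≠ id and every x ∈ E_n, γ x ≠ x. -/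
/-- A closed subgroup of the isometry group of `ℝⁿ` that is isomorphic to `ℤᵏ`
acts freely on `ℝⁿ`. -/
theorem closed_zk_subgroup_acts_freely (n k : ℕ)
    (Γ : Subgroup (EuclideanSpace ℝ (Fin n) ≃ᵢ EuclideanSpace ℝ (Fin n)))
    (hiso : Nonempty (Γ ≃* Multiplicative (Fin k → ℤ)))
    (hclosed : IsClosed {f : EuclideanSpace ℝ (Fin n) → EuclideanSpace ℝ (Fin n) |
      ∃ γ ∈ Γ, ⇑γ = f}) :
    ∀ γ ∈ Γ, γ ≠ 1 → ∀ x : EuclideanSpace ℝ (Fin n), γ x ≠ x := by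
  set E := EuclideanSpace ℝ (Fin n)
  intro γ hγ hne x hfix
  obtain ⟨e⟩ := hiso
  -- γ has infinite order
  have hginf : ¬ IsOfFinOrder γ := by
    intro hfin
    have hfin' : IsOfFinOrder (⟨γ, hγ⟩ : Γ) := by
      rw [isOfFinOrder_iff_pow_eq_one] at hfin ⊢
      obtain ⟨m, hm, hm1⟩ := hfin
      exact ⟨m, hm, Subtype.ext (by rw [SubgroupClass.coe_pow]; exact hm1)⟩
    have : IsOfFinOrder (e ⟨γ, hγ⟩) := e.toMonoidHom.isOfFinOrder hfin'
    have hne' : e ⟨γ, hγ⟩ ≠ 1 := by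
      simp only [ne_eq, map_eq_one_iff e e.injective]
      intro h
      exact hne (congrArg Subtype.val h)
    rw [show e ⟨γ, hγ⟩ = Multiplicative.ofAdd (Multiplicative.toAdd (e ⟨γ, hγ⟩)) from rfl,
      isOfFinOrder_ofAdd_iff, isOfFinAddOrder_iff_nsmul_eq_zero] at this
    obtain ⟨m, hm, hm0⟩ := this
    apply hne'
    have : Multiplicative.toAdd (e ⟨γ, hγ⟩) = 0 := by
      funext i
      have h2 : m • (Multiplicative.toAdd (e ⟨γ, hγ⟩) i) = 0 := by
        simpa using congrFun hm0 i
      rcases smul_eq_zero.mp h2 with h | h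
      · exact absurd (by exact_mod_cast h) hm.ne'
      · exact h
    have : e ⟨γ, hγ⟩ = 1 := by
      have := congrArg Multiplicative.ofAdd this
      simpa using this
    exact this
  classical
  set T : Set (E → E) := {f | (∃ σ ∈ Γ, ⇑σ = f) ∧ f x = x} with hTdef
  have hTclosed : IsClosed T := by
    have h2 : IsClosed {f : E → E | f x = x} :=
      isClosed_eq (continuous_apply x) continuous_const
    exact hclosed.inter h2
  have hK : IsCompact {f : E → E | ∀ y, f y ∈ Metric.closedBall x (dist x y)} := by
    have h := isCompact_univ_pi (fun y : E => isCompact_closedBall x (dist x y))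
    convert h using 1
    ext f
    simp [Set.mem_univ_pi]
    rfl
  have hTsub : T ⊆ {f : E → E | ∀ y, f y ∈ Metric.closedBall x (dist x y)} := by
    rintro f ⟨⟨σ, hσ, rfl⟩, hfx⟩ y
    rw [Metric.mem_closedBall]
    refine le_of_eq ?_
    calc dist (σ y) x = dist (σ y) (σ x) := by rw [hfx]
    _ = dist y x := σ.isometry.dist_eq y x
    _ = dist x y := dist_comm _ _
  have hTcomp : IsCompact T := hK.of_isClosed_subset hTclosed hTsub
  haveI : Countable (Multiplicative (Fin k → ℤ)) :=
    Countable.of_equiv _ Multiplicative.ofAdd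
  haveI hΓc : Countable Γ := Countable.of_equiv _ e.toEquiv.symm
  have hTcount : T.Countable := by
    have hsub : T ⊆ Set.range (fun σ : Γ => ⇑(σ : E ≃ᵢ E)) := by
      rintro f ⟨⟨σ, hσ, rfl⟩, -⟩
      exact ⟨⟨σ, hσ⟩, rfl⟩
    exact (Set.countable_range _).mono hsub
  haveI : CompactSpace ↥T := isCompact_iff_compactSpace.mp hTcomp
  haveI : Countable ↥T := hTcount.to_subtype
  haveI : Nonempty ↥T := ⟨⟨⇑γ, ⟨γ, hγ, rfl⟩, hfix⟩⟩
  haveI : T2Space ↥T := inferInstance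
  haveI : LocallyCompactSpace ↥T := inferInstance
  haveI : BaireSpace ↥T := inferInstance
  -- Baire: there is an isolated point
  obtain ⟨i, hi⟩ := nonempty_interior_of_iUnion_of_closed
    (f := fun i : ↥T => ({i} : Set ↥T)) (fun i => isClosed_singleton)
    (by ext j; simp)
  have hiopen : IsOpen ({i} : Set ↥T) := by
    have h1 : interior ({i} : Set ↥T) = {i} :=
      (Set.Nonempty.subset_singleton_iff hi).mp interior_subset
    exact h1 ▸ isOpen_interior
  obtain ⟨U, hUopen, hU⟩ := isOpen_induced_iff.mp hiopen
  obtain ⟨⟨σ₀, hσ₀Γ, hσ₀⟩, hix⟩ := i.2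
  have hσ₀x : σ₀ x = x := by rw [show σ₀ x = i.val x from congrFun hσ₀ x]; exact hix
  have hiU : i.val ∈ U := by
    have : i ∈ Subtype.val ⁻¹' U := by rw [hU]; rfl
    exact this
  -- every fixed-point element is isolated
  have key : ∀ τ : E ≃ᵢ E, τ ∈ Γ → τ x = x →
      ∃ V : Set (E → E), IsOpen V ∧ V ∩ T = {⇑τ} := by
    intro τ hτΓ hτx
    have hτ'x : τ⁻¹ x = x := by
      conv_lhs => rw [← hτx]
      exact τ.symm_apply_apply x
    refine ⟨(fun g => ⇑(σ₀ * τ⁻¹) ∘ g) ⁻¹' U,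
      hUopen.preimage (continuous_pi fun y =>
        ((σ₀ * τ⁻¹).continuous).comp (continuous_apply y)), ?_⟩
    ext g
    simp only [Set.mem_inter_iff, Set.mem_preimage, Set.mem_singleton_iff]
    constructor
    · rintro ⟨hgU, ⟨ρ, hρΓ, rfl⟩, hρx⟩
      have hmemT : ⇑(σ₀ * τ⁻¹ * ρ) ∈ T := by
        refine ⟨⟨_, mul_mem (mul_mem hσ₀Γ (inv_mem hτΓ)) hρΓ, rfl⟩, ?_⟩
        show (σ₀ * τ⁻¹ * ρ) x = x
        simp only [IsometryEquiv.coe_mul, Function.comp_apply]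
        rw [hρx, hτ'x, hσ₀x]
      have hmemU : ⇑(σ₀ * τ⁻¹ * ρ) ∈ U := by
        have : ⇑(σ₀ * τ⁻¹ * ρ) = ⇑(σ₀ * τ⁻¹) ∘ ⇑ρ := by
          rw [← IsometryEquiv.coe_mul]
        rw [this]
        exact hgU
      have : (⟨_, hmemT⟩ : ↥T) = i := by
        have : (⟨_, hmemT⟩ : ↥T) ∈ Subtype.val ⁻¹' U := hmemU
        rw [hU] at this
        exact this
      have hcoe : ⇑(σ₀ * τ⁻¹ * ρ) = ⇑σ₀ := by
        rw [hσ₀]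
        exact congrArg Subtype.val this
      have heq : σ₀ * τ⁻¹ * ρ = σ₀ := IsometryEquiv.ext (congrFun hcoe)
      have : τ⁻¹ * ρ = 1 := by
        have h1 : σ₀ * (τ⁻¹ * ρ) = σ₀ * 1 := by rw [← mul_assoc, heq, mul_one]
        exact mul_left_cancel h1
      have : ρ = τ := by
        rw [inv_mul_eq_one] at this
        exact this.symm
      rw [this]
    · rintro rfl
      refine ⟨?_, ⟨τ, hτΓ, rfl⟩, hτx⟩
      have : ⇑(σ₀ * τ⁻¹) ∘ ⇑τ = ⇑σ₀ := by
        rw [← IsometryEquiv.coe_mul, inv_mul_cancel_right]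
      rw [this, hσ₀]
      exact hiU
  -- hence T is discrete, hence finite
  have hsing : ∀ j : ↥T, IsOpen ({j} : Set ↥T) := by
    intro j
    obtain ⟨⟨ρ, hρΓ, hρ⟩, hρx⟩ := j.2
    obtain ⟨V, hVopen, hV⟩ := key ρ hρΓ (by rw [show ρ x = j.val x from congrFun hρ x]; exact hρx)
    rw [isOpen_induced_iff]
    refine ⟨V, hVopen, ?_⟩
    ext l
    simp only [Set.mem_preimage, Set.mem_singleton_iff]
    constructor
    · intro hl
      have hmem : l.val ∈ V ∩ T := ⟨hl, l.2⟩
      rw [hV] at hmem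
      exact Subtype.ext (hmem.trans hρ)
    · rintro rfl
      have : l.val ∈ V ∩ T := by rw [hV]; exact hρ.symm
      exact this.1
  haveI : DiscreteTopology ↥T := discreteTopology_iff_isOpen_singleton.mpr hsing
  haveI : Finite ↥T := finite_of_compact_of_discrete
  have hTfin : T.Finite := Set.finite_coe_iff.mp ‹Finite ↥T›
  -- but T is infinite
  have hinj : Function.Injective (fun m : ℕ => γ ^ m) :=
    injective_pow_iff_not_isOfFinOrder.mpr hginf
  have hfixpow : ∀ m : ℕ, (γ ^ m) x = x := by
    intro m
    induction m with
    | zero => rfl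
    | succ m ih =>
      rw [pow_succ, IsometryEquiv.coe_mul, Function.comp_apply, hfix]
      exact ih
  have hTinf : T.Infinite := by
    apply Set.infinite_of_injective_forall_mem (f := fun m : ℕ => ⇑(γ ^ m))
    · intro a b hab
      exact hinj (IsometryEquiv.ext (congrFun hab))
    · intro m
      exact ⟨⟨γ ^ m, pow_mem hγ m, rfl⟩, hfixpow m⟩
  exact hTinf hTfin
end

section
/- Let E be a finite-dimensional real inner product space of dimension k, let f : E → E be a surjective isometry, and let v_1, …, v_k ∈ E be linearly independent vectors (hence a basis of E) such that f commutes with the translation by each v_i, i.e. f(x + v_i) = f(x) + v_i for all x ∈ E and all i. Then f is itself a translation: there exists w ∈ E such that f(x) = x + w for all x ∈ E. -/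
/-- A surjective isometry of a `k`-dimensional real inner product space which
commutes with `k` linearly independent translations is itself a translation. -/
theorem isometry_commuting_with_independent_translations_is_translation
    {E : Type*} [NormedAddCommGroup E] [InnerProductSpace ℝ E]
    [FiniteDimensional ℝ E] (k : ℕ) (hdim : Module.finrank ℝ E = k)
    (f : E → E) (hf : Isometry f) (hsurj : Function.Surjective f)
    (v : Fin k → E) (hli : LinearIndependent ℝ v)
    (hcomm : ∀ (i : Fin k) (x : E), f (x + v i) = f x + v i) :
    ∃ w : E, ∀ x : E, f x = x + w := by
  rcases Nat.eq_zero_or_pos k with hk | hk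
  · -- trivial case: E is a subsingleton
    subst hk
    have : Subsingleton E := by
      rw [← Module.finrank_zero_iff (R := ℝ)]; exact hdim
    exact ⟨f 0, fun x => Subsingleton.elim _ _⟩
  · have : Nonempty (Fin k) := ⟨⟨0, hk⟩⟩
    set φ : E ≃ᵢ E := IsometryEquiv.mk (Equiv.ofBijective f ⟨hf.injective, hsurj⟩) hf
      with hφdef
    have hφ : ∀ x, φ x = f x := fun _ => rfl
    set g := φ.toRealAffineIsometryEquiv with hgdef
    have hg : ∀ x, g x = f x := fun x => by
      rw [show (g : E → E) = ⇑φ from φ.coeFn_toRealAffineIsometryEquiv]; exact hφ x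
    set L := g.linearIsometryEquiv with hLdef
    have hdecomp : ∀ x : E, f x = L x + f 0 := by
      intro x
      have := g.map_vadd 0 x
      simpa [hg, vadd_eq_add, add_comm] using this
    have hLv : ∀ i, L (v i) = v i := by
      intro i
      have h1 : f (0 + v i) = f 0 + v i := hcomm i 0
      rw [zero_add, hdecomp (v i)] at h1
      have h2 : L (v i) + f 0 = v i + f 0 := by rw [h1, add_comm]
      exact add_right_cancel h2
    have hL : ∀ x : E, L x = x := by
      have card : Fintype.card (Fin k) = Module.finrank ℝ E := by simp [hdim]
      set b := basisOfLinearIndependentOfCardEqFinrank hli card with hb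
      have hbv : ∀ i, b i = v i := fun i =>
        congrFun (coe_basisOfLinearIndependentOfCardEqFinrank hli card) i
      have : L.toLinearMap = LinearMap.id := by
        apply b.ext
        intro i
        simpa [hbv i] using hLv i
      intro x
      simpa using LinearMap.congr_fun this x
    exact ⟨f 0, fun x => by rw [hdecomp x, hL x]⟩
end

section
/- Let k be a natural number and let G be an abelian subgroup of the isometry group of E_k = EuclideanSpace ℝ (Fin k) whose orbit of the origin is cocompact, i.e. there exists R > 0 such that for every x ∈ E_k there is g ∈ G with dist x (g 0) ≤ R. Then G acts on E_k by translations: for every g ∈ G there exists v ∈ E_k such that g x = x + v for all x ∈ E_k. -/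
/-- A linear map that is bounded in norm on all of space is zero. -/
lemma linear_bounded_eq_zero {E : Type*} [NormedAddCommGroup E] [NormedSpace ℝ E]
    (L : E →ₗ[ℝ] E) (C : ℝ) (hC : ∀ x, ‖L x‖ ≤ C) : ∀ x, L x = 0 := by
  intro x
  rw [← norm_le_zero_iff]
  by_contra h
  push_neg at h
  have hx : 0 < ‖L x‖ := lt_of_le_of_lt (le_refl 0) h |>.trans_le (le_refl _) |>.trans_le (le_refl _)
  obtain ⟨n, hn⟩ := exists_nat_gt (C / ‖L x‖)
  have hn' : (0:ℝ) < n + 1 := by positivity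
  have := hC ((n + 1 : ℝ) • x)
  rw [map_smul, norm_smul, Real.norm_eq_abs, abs_of_pos hn'] at this
  have h2 : C / ‖L x‖ < n + 1 := lt_of_lt_of_le hn (by linarith)
  have h3 : C < (n + 1) * ‖L x‖ := (div_lt_iff₀ hx).mp h2
  linarith

/-- An abelian subgroup of the isometry group of Euclidean space whose orbit
of the origin is cocompact acts by translations. -/
theorem abelian_cocompact_subgroup_acts_by_translations (k : ℕ)
    (G : Subgroup (EuclideanSpace ℝ (Fin k) ≃ᵢ EuclideanSpace ℝ (Fin k)))
    (hab : ∀ g ∈ G, ∀ h ∈ G, g * h = h * g)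
    (hcocompact : ∃ R : ℝ, 0 < R ∧ ∀ x : EuclideanSpace ℝ (Fin k),
      ∃ g ∈ G, dist x (g (0 : EuclideanSpace ℝ (Fin k))) ≤ R) :
    ∀ g ∈ G, ∃ v : EuclideanSpace ℝ (Fin k),
      ∀ x : EuclideanSpace ℝ (Fin k), g x = x + v := by
  obtain ⟨R, hR, hcc⟩ := hcocompact
  intro g hg
  set E := EuclideanSpace ℝ (Fin k)
  set b : E := g 0 with hb
  -- the linear part of g
  set A := g.toRealLinearIsometryEquiv with hA
  have hAapp : ∀ x : E, A x = g x - b := fun x => g.toRealLinearIsometryEquiv_apply x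
  -- the linear map L x = A x - x is globally bounded
  set L : E →ₗ[ℝ] E := A.toLinearEquiv.toLinearMap - LinearMap.id with hL
  have hLapp : ∀ x : E, L x = g x - b - x := by
    intro x
    simp only [hL, LinearMap.sub_apply, LinearMap.id_apply, LinearEquiv.coe_coe]
    rw [show (A.toLinearEquiv : E → E) x = A x from rfl, hAapp]
  have hbound : ∀ x : E, ‖L x‖ ≤ 2 * R + 2 * ‖b‖ := by
    intro x
    obtain ⟨h, hh, hdist⟩ := hcc x
    set c : E := h 0 with hc
    -- from commutativity: g (h 0) = h (g 0)
    have hcomm : g (h 0) = h (g 0) := by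
      have := hab g hg h hh
      have := congrArg (fun f => (f : E ≃ᵢ E) 0) this
      simpa using this
    -- key: ‖g c - b - c‖ ≤ 2‖b‖ since h is an isometry
    have hkey : ‖g c - b - c‖ ≤ 2 * ‖b‖ := by
      have : g c - b - c = (h b - h 0) - b := by
        rw [← hc, hcomm, hb]; abel
      rw [this]
      have hiso : ‖h b - h 0‖ = ‖b‖ := by
        rw [← dist_eq_norm, h.isometry.dist_eq, dist_eq_norm, sub_zero]
      calc ‖h b - h 0 - b‖ ≤ ‖h b - h 0‖ + ‖b‖ := norm_sub_le _ _
        _ = 2 * ‖b‖ := by rw [hiso]; ring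
    have hxc : ‖x - c‖ ≤ R := by rwa [← dist_eq_norm]
    have hgxc : ‖g x - g c‖ = ‖x - c‖ := by
      rw [← dist_eq_norm, g.isometry.dist_eq, dist_eq_norm]
    calc ‖L x‖ = ‖(g x - g c) + (g c - b - c) + (c - x)‖ := by rw [hLapp]; congr 1; abel
      _ ≤ ‖(g x - g c) + (g c - b - c)‖ + ‖c - x‖ := norm_add_le _ _
      _ ≤ ‖g x - g c‖ + ‖g c - b - c‖ + ‖c - x‖ := by
          have := norm_add_le (g x - g c) (g c - b - c); linarith
      _ ≤ ‖x - c‖ + 2 * ‖b‖ + ‖x - c‖ := by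
          rw [hgxc, norm_sub_rev x c] at *
          have : ‖c - x‖ = ‖x - c‖ := norm_sub_rev c x
          linarith [hkey]
      _ ≤ 2 * R + 2 * ‖b‖ := by linarith
  have hzero := linear_bounded_eq_zero L _ hbound
  refine ⟨b, fun x => ?_⟩
  have := hzero x
  rw [hLapp] at this
  have : g x - b - x = 0 := this
  linear_combination (norm := module) this
end

section
/- Let G be a group that is nilpotent and torsion-free (no element other than the identity has finite order). If G contains an abelian subgroup of finite index, then G is abelian. -/
/-- If `x * g * x⁻¹ = c * g` with `c` central, then `x ^ m * g * (x ^ m)⁻¹ = c ^ m * g`. -/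
lemma aux_conj_pow {G : Type*} [Group G] {x g c : G} (hc : c ∈ Subgroup.center G)
    (h : x * g * x⁻¹ = c * g) (m : ℕ) : x ^ m * g * (x ^ m)⁻¹ = c ^ m * g := by
  induction m with
  | zero => simp
  | succ m ih =>
    have h1 : x ^ (m + 1) * g * (x ^ (m + 1))⁻¹ = x * (x ^ m * g * (x ^ m)⁻¹) * x⁻¹ := by
      rw [pow_succ']; group
    rw [h1, ih]
    have hxc : x * c ^ m = c ^ m * x := Subgroup.mem_center_iff.mp (pow_mem hc m) x
    calc x * (c ^ m * g) * x⁻¹ = x * c ^ m * g * x⁻¹ := by group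
      _ = c ^ m * x * g * x⁻¹ := by rw [hxc]
      _ = c ^ m * (x * g * x⁻¹) := by group
      _ = c ^ m * (c * g) := by rw [h]
      _ = c ^ (m + 1) * g := by rw [pow_succ, mul_assoc]

/-- If the center is torsion-free, `x` commutes with everything modulo the center,
and some positive power of `x` is central, then `x` is central. -/
lemma aux_central_of_pow_central {G : Type*} [Group G]
    (hZ : ∀ z ∈ Subgroup.center G, ∀ n : ℕ, 0 < n → z ^ n = 1 → z = 1)
    {x : G} (hx : ∀ g : G, ∃ c ∈ Subgroup.center G, x * g * x⁻¹ = c * g)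
    {n : ℕ} (hn : 0 < n) (hxn : x ^ n ∈ Subgroup.center G) : x ∈ Subgroup.center G := by
  rw [Subgroup.mem_center_iff]
  intro g
  obtain ⟨c, hc, hcg⟩ := hx g
  have h1 : x ^ n * g * (x ^ n)⁻¹ = c ^ n * g := aux_conj_pow hc hcg n
  have h2 : x ^ n * g * (x ^ n)⁻¹ = 1 * g := by
    rw [one_mul]
    have := Subgroup.mem_center_iff.mp hxn g
    rw [← this]
    group
  have hcn : c ^ n = 1 := mul_right_cancel (h1.symm.trans h2)
  have hc1 : c = 1 := hZ c hc n hn hcn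
  have h3 : x * g * x⁻¹ = g := by rw [hcg, hc1, one_mul]
  calc g * x = x * g * x⁻¹ * x := by rw [h3]
    _ = x * g := by group

/-- If `x` commutes with `g` modulo the center, then the commutator `x*g*x⁻¹*g⁻¹`
is central. -/
lemma aux_comm_mod_center {G : Type*} [Group G] {x g : G}
    (h : (x : G ⧸ Subgroup.center G) * (g : G ⧸ Subgroup.center G) = g * x) :
    ∃ c ∈ Subgroup.center G, x * g * x⁻¹ = c * g := by
  set Q := G ⧸ Subgroup.center G
  have hc : Commute (x : Q) (g : Q) := h
  have hc' : ((x : G) : Q) * ((g⁻¹ : G) : Q) = ((g⁻¹ : G) : Q) * ((x : G) : Q) := by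
    rw [QuotientGroup.mk_inv]
    exact hc.inv_right
  -- hence ↑(x * g⁻¹) = ↑(g⁻¹ * x), so k' := (x * g⁻¹)⁻¹ * (g⁻¹ * x)... careful
  have heq : ((x * g⁻¹ : G) : Q) = ((g⁻¹ * x : G) : Q) := by
    rw [QuotientGroup.mk_mul, QuotientGroup.mk_mul, hc']
  rw [QuotientGroup.eq] at heq
  -- heq : (x * g⁻¹)⁻¹ * (g⁻¹ * x) ∈ center G
  have hk : x⁻¹ * g * x * g⁻¹ ∈ Subgroup.center G := by
    have : (x * g⁻¹)⁻¹ * (g⁻¹ * x) ∈ Subgroup.center G := heq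
    have h2 : (x * g⁻¹)⁻¹ * (g⁻¹ * x) = (x⁻¹ * g * x * g⁻¹)⁻¹ := by group
    rw [h2] at this
    exact (Subgroup.inv_mem_iff _).mp this
  set k : G := x⁻¹ * g * x * g⁻¹ with hkdef
  have hxk : x * k = k * x := Subgroup.mem_center_iff.mp hk x
  -- x * k * x⁻¹ = k, and x * k * x⁻¹ = g * x * g⁻¹ * x⁻¹
  have h3 : g * x * g⁻¹ * x⁻¹ = k := by
    calc g * x * g⁻¹ * x⁻¹ = x * k * x⁻¹ := by rw [hkdef]; group
      _ = k * x * x⁻¹ := by rw [hxk]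
      _ = k := by group
  refine ⟨x * g * x⁻¹ * g⁻¹, ?_, by group⟩
  have h4 : x * g * x⁻¹ * g⁻¹ = (g * x * g⁻¹ * x⁻¹)⁻¹ := by group
  rw [h4, h3]
  exact inv_mem hk

/-- Mal'cev: in a nilpotent group with torsion-free center, roots of central
elements are central. -/
lemma aux_malcev : ∀ (c : ℕ) (G : Type*) [Group G],
    Subgroup.upperCentralSeries G c = ⊤ →
    (∀ z ∈ Subgroup.center G, ∀ n : ℕ, 0 < n → z ^ n = 1 → z = 1) →
    ∀ (x : G) (n : ℕ), 0 < n → x ^ n ∈ Subgroup.center G → x ∈ Subgroup.center G := by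
  intro c
  induction c with
  | zero =>
    intro G _ htop _ x n _ _
    have hx : x ∈ (⊥ : Subgroup G) := by
      rw [← upperCentralSeries_zero (G := G), htop]; trivial
    rw [Subgroup.mem_bot] at hx
    rw [hx]
    exact Subgroup.one_mem _
  | succ c ih =>
    intro G _ htop hZ x n hn hxn
    set Q := G ⧸ Subgroup.center G with hQ
    have hQtop : Subgroup.upperCentralSeries Q c = ⊤ := by
      have h1 := comap_upperCentralSeries_quotient_center (G := G) c
      rw [htop] at h1
      exact Subgroup.comap_injective (f := QuotientGroup.mk' (Subgroup.center G))
        QuotientGroup.mk_surjective (by rw [h1, Subgroup.comap_top])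
    have hQZ : ∀ z ∈ Subgroup.center Q, ∀ m : ℕ, 0 < m → z ^ m = 1 → z = 1 := by
      intro zq hzq m hm hzm
      obtain ⟨z, rfl⟩ := QuotientGroup.mk_surjective zq
      have hzmem : z ^ m ∈ Subgroup.center G := by
        rw [← QuotientGroup.eq_one_iff (N := Subgroup.center G) (z ^ m)]
        rw [QuotientGroup.mk_pow]
        exact hzm
      have hzcomm : ∀ g : G, ∃ cc ∈ Subgroup.center G, z * g * z⁻¹ = cc * g := by
        intro g
        exact aux_comm_mod_center ((Subgroup.mem_center_iff.mp hzq (g : Q)).symm)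
      have hzc : z ∈ Subgroup.center G :=
        aux_central_of_pow_central hZ hzcomm hm hzmem
      exact (QuotientGroup.eq_one_iff z).mpr hzc
    have hxq : (x : Q) ^ n ∈ Subgroup.center Q := by
      have h1 : ((x ^ n : G) : Q) = 1 := (QuotientGroup.eq_one_iff (x ^ n)).mpr hxn
      rw [← QuotientGroup.mk_pow, h1]
      exact Subgroup.one_mem _
    have hxcent : (x : Q) ∈ Subgroup.center Q := ih Q hQtop hQZ (x : Q) n hn hxq
    have hxcomm : ∀ g : G, ∃ cc ∈ Subgroup.center G, x * g * x⁻¹ = cc * g := by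
      intro g
      exact aux_comm_mod_center ((Subgroup.mem_center_iff.mp hxcent (g : Q)).symm)
    exact aux_central_of_pow_central hZ hxcomm hn hxn

/-- In a torsion-free nilpotent group, if a positive power of `x` commutes with `y`,
then `x` commutes with `y`. -/
lemma aux_commute_of_pow_commute : ∀ (c : ℕ) (G : Type*) [Group G],
    Subgroup.upperCentralSeries G c = ⊤ →
    (∀ z : G, ∀ n : ℕ, 0 < n → z ^ n = 1 → z = 1) →
    ∀ (x y : G) (n : ℕ), 0 < n → x ^ n * y = y * x ^ n → x * y = y * x := by
  intro c
  induction c with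
  | zero =>
    intro G _ htop _ x y n _ _
    have hx : x ∈ (⊥ : Subgroup G) := by
      rw [← upperCentralSeries_zero (G := G), htop]; trivial
    rw [Subgroup.mem_bot] at hx
    rw [hx, one_mul, mul_one]
  | succ c ih =>
    intro G _ htop htf x y n hn hcomm
    set Q := G ⧸ Subgroup.center G with hQ
    have hZ : ∀ z ∈ Subgroup.center G, ∀ m : ℕ, 0 < m → z ^ m = 1 → z = 1 :=
      fun z _ m hm h => htf z m hm h
    have hQtop : Subgroup.upperCentralSeries Q c = ⊤ := by
      have h1 := comap_upperCentralSeries_quotient_center (G := G) c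
      rw [htop] at h1
      exact Subgroup.comap_injective (f := QuotientGroup.mk' (Subgroup.center G))
        QuotientGroup.mk_surjective (by rw [h1, Subgroup.comap_top])
    -- the quotient is torsion-free (via Mal'cev)
    have hQtf : ∀ z : Q, ∀ m : ℕ, 0 < m → z ^ m = 1 → z = 1 := by
      intro zq m hm hzm
      obtain ⟨z, rfl⟩ := QuotientGroup.mk_surjective zq
      have hzmem : z ^ m ∈ Subgroup.center G := by
        rw [← QuotientGroup.eq_one_iff (N := Subgroup.center G) (z ^ m),
          QuotientGroup.mk_pow]
        exact hzm
      exact (QuotientGroup.eq_one_iff z).mpr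
        (aux_malcev (c + 1) G htop hZ z m hm hzmem)
    -- by induction hypothesis in the quotient, x and y commute mod the center
    have hq : (x : Q) * (y : Q) = (y : Q) * (x : Q) := by
      apply ih Q hQtop hQtf _ _ n hn
      rw [← QuotientGroup.mk_pow, ← QuotientGroup.mk_mul, ← QuotientGroup.mk_mul, hcomm]
    obtain ⟨e, hec, hconj⟩ := aux_comm_mod_center (x := x) (g := y) hq
    have hpow : x ^ n * y * (x ^ n)⁻¹ = e ^ n * y := aux_conj_pow hec hconj n
    have hpow1 : x ^ n * y * (x ^ n)⁻¹ = 1 * y := by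
      rw [one_mul, hcomm]; group
    have hen : e ^ n = 1 := mul_right_cancel (hpow.symm.trans hpow1)
    have he1 : e = 1 := htf e n hn hen
    have h5 : x * y * x⁻¹ = y := by rw [hconj, he1, one_mul]
    calc x * y = x * y * x⁻¹ * x := by group
      _ = y * x := by rw [h5]

/-- A torsion-free nilpotent group which is virtually abelian is abelian. -/
theorem torsionfree_nilpotent_virtually_abelian_is_abelian
    {G : Type*} [Group G] [Group.IsNilpotent G]
    (htf : ∀ g : G, g ≠ 1 → ¬IsOfFinOrder g)
    (H : Subgroup G) (hab : ∀ a ∈ H, ∀ b ∈ H, a * b = b * a)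
    (hfin : H.index ≠ 0) :
    ∀ g h : G, g * h = h * g := by
  obtain ⟨c, hc⟩ := Group.IsNilpotent.nilpotent (G := G)
  have htf' : ∀ z : G, ∀ n : ℕ, 0 < n → z ^ n = 1 → z = 1 := by
    intro z n hn hz
    by_contra hne
    exact htf z hne (isOfFinOrder_iff_pow_eq_one.mpr ⟨n, hn, hz⟩)
  intro g h
  obtain ⟨m, hm, _, hgm⟩ := Subgroup.exists_pow_mem_of_index_ne_zero hfin g
  obtain ⟨k, hk, _, hhk⟩ := Subgroup.exists_pow_mem_of_index_ne_zero hfin h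
  have h1 : g ^ m * h ^ k = h ^ k * g ^ m := hab _ hgm _ hhk
  have h2 : g * h ^ k = h ^ k * g :=
    aux_commute_of_pow_commute c G hc htf' g (h ^ k) m hm h1
  have h3 : h * g = g * h :=
    aux_commute_of_pow_commute c G hc htf' h g k hk (by rw [← h2])
  exact h3.symm
end
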